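/- Let T be a tree, s a vertex of T of type A, and t a neighbour of s in T. Let T_s and T_t denote the connected components of T − st containing s and t respectively. Then t is of type B in T, and moreover μ(T_s − s) = μ(T_s), μ(T_t − t) = μ(T_t) − 1, μ(T) = μ(T_s) + μ(T_t), and m(T) = m(T_s) m(T_t) + m(T_s − s) m(T_t − t). -/

import Mathlib

namespace PaperMM

open SimpleGraph

/-- `M` is a matching of `G`: a set of edges of `G` that are pairwise disjoint. -/
def IsMatchingSet {V : Type} (G : SimpleGraph V) (M : Set (Sym2 V)) : Prop :=
  M ⊆ G.edgeSet ∧ M.Pairwise fun e f => ∀ v : V, ¬(v ∈ e ∧ v ∈ f)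

/-- The matching number `μ(G)`: the maximum cardinality of a matching of `G`. -/
noncomputable def matchNum {V : Type} (G : SimpleGraph V) : ℕ :=
  sSup {n | ∃ M : Set (Sym2 V), IsMatchingSet G M ∧ M.ncard = n}

/-- The set of maximum matchings of `G`. -/
def MaximumMatchings {V : Type} (G : SimpleGraph V) : Set (Set (Sym2 V)) :=
  {M | IsMatchingSet G M ∧ M.ncard = matchNum G}

/-- `m(G)`: the number of maximum matchings of `G`. -/
noncomputable def mm {V : Type} (G : SimpleGraph V) : ℕ := (MaximumMatchings G).ncard

/-- The matching `M` covers the vertex `v`. -/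
def Covers {V : Type} (M : Set (Sym2 V)) (v : V) : Prop := ∃ e ∈ M, v ∈ e

/-- `v` is of type A in `G`: some maximum matching of `G` does not cover `v`. -/
def TypeA {V : Type} (G : SimpleGraph V) (v : V) : Prop :=
  ∃ M ∈ MaximumMatchings G, ¬ Covers M v

/-- `v` is of type B in `G`: every maximum matching of `G` covers `v`. -/
def TypeB {V : Type} (G : SimpleGraph V) (v : V) : Prop := ¬ TypeA G v

/-- `G` has a perfect matching. -/
def HasPerfectMatching {V : Type} (G : SimpleGraph V) : Prop :=
  ∃ M : Set (Sym2 V), IsMatchingSet G M ∧ ∀ v, Covers M v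

/-- The degree of `v` in `G`. -/
noncomputable def degS {V : Type} (G : SimpleGraph V) (v : V) : ℕ := (G.neighborSet v).ncard

/-- `G` is an optimal tree: a tree maximising `m` among all trees of the same order. -/
def OptimalTree {V : Type} [Fintype V] (G : SimpleGraph V) : Prop :=
  G.IsTree ∧ ∀ H : SimpleGraph (Fin (Fintype.card V)), H.IsTree → mm H ≤ mm G

/-- The vertex set of the connected component of `s` in `G - st`. -/
def sideSet {V : Type} (G : SimpleGraph V) (s t : V) : Set V :=
  {v | (G.deleteEdges {s(s, t)}).Reachable s v}

/-- The connected component of `s` in `G - st`, as a graph. -/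
def sideGraph {V : Type} (G : SimpleGraph V) (s t : V) :
    SimpleGraph (sideSet G s t) :=
  (G.deleteEdges {s(s, t)}).induce (sideSet G s t)

theorem mem_sideSet_self {V : Type} (G : SimpleGraph V) (s t : V) : s ∈ sideSet G s t :=
  SimpleGraph.Reachable.refl s

/-- The root of the component of `s` in `G - st`, i.e. `s` itself. -/
def sideRoot {V : Type} (G : SimpleGraph V) (s t : V) : sideSet G s t :=
  ⟨s, mem_sideSet_self G s t⟩

/-- `μ(T_s)` where `T_s` is the component of `s` in `G - st`. -/
noncomputable def sideMu {V : Type} (G : SimpleGraph V) (s t : V) : ℕ := matchNum (sideGraph G s t)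

/-- `m(T_s)` where `T_s` is the component of `s` in `G - st`. -/
noncomputable def sideM {V : Type} (G : SimpleGraph V) (s t : V) : ℕ := mm (sideGraph G s t)

/-- `μ(T_s − s)` where `T_s` is the component of `s` in `G - st`. -/
noncomputable def sideMuDel {V : Type} (G : SimpleGraph V) (s t : V) : ℕ :=
  matchNum ((G.deleteEdges {s(s, t)}).induce (sideSet G s t \ {s}))

/-- `m(T_s − s)` where `T_s` is the component of `s` in `G - st`. -/
noncomputable def sideMDel {V : Type} (G : SimpleGraph V) (s t : V) : ℕ :=
  mm ((G.deleteEdges {s(s, t)}).induce (sideSet G s t \ {s}))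

/-- A rooted graph: a vertex type, a graph on it, and a root vertex. -/
structure RGraph : Type 1 where
  V : Type
  G : SimpleGraph V
  root : V

/-- `m(T)` for a rooted graph. -/
noncomputable def RGraph.m (T : RGraph) : ℕ := mm T.G

/-- `m_0(T) = m(T − r)` for a rooted graph with root `r`. -/
noncomputable def RGraph.m0 (T : RGraph) : ℕ := mm (T.G.induce {v | v ≠ T.root})

/-- `m_1(T)`: the number of maximum matchings of `G` covering `r`. -/
noncomputable def mmCover {V : Type} (G : SimpleGraph V) (r : V) : ℕ :=
  {M | M ∈ MaximumMatchings G ∧ Covers M r}.ncard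

/-- The order (number of vertices) of a rooted graph. -/
noncomputable def RGraph.order (T : RGraph) : ℕ := Nat.card T.V

/-- Isomorphism of rooted graphs: a graph isomorphism mapping root to root. -/
def RGraph.RIso (T T' : RGraph) : Prop :=
  ∃ φ : T.G ≃g T'.G, φ T.root = T'.root

/-- The one-vertex rooted tree `L`. -/
def rL : RGraph := ⟨PUnit, ⊥, PUnit.unit⟩

/-- The fork `F`: the root `0` is adjacent to `1`, which is adjacent to the leaves `2`, `3`. -/
def rF : RGraph :=
  ⟨Fin 4, SimpleGraph.fromRel (fun a b => (a = 0 ∧ b = 1) ∨ (a = 1 ∧ b = 2) ∨ (a = 1 ∧ b = 3)), 0⟩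

/-- The rooted tree `B₂*`: a single edge rooted at one endpoint. -/
def rB2 : RGraph := ⟨Fin 2, SimpleGraph.fromRel (fun a b => a = 0 ∧ b = 1), 0⟩

/-- The rooted tree `A₃*`: a path on three vertices rooted at an endpoint. -/
def rA3 : RGraph :=
  ⟨Fin 3, SimpleGraph.fromRel (fun a b => (a = 0 ∧ b = 1) ∨ (a = 1 ∧ b = 2)), 0⟩

/-- The `k`-claw: the star `K_{1,k}` rooted at its center. -/
def claw (k : ℕ) : RGraph :=
  ⟨Fin (k + 1), SimpleGraph.fromRel (fun a b => a = 0 ∧ b ≠ 0), 0⟩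

/-- The chain construction `C`: seven new vertices are added to the rooted tree `T`;
`Sum.inr 0` is the new root `s`, `Sum.inr 1` is the vertex `b` adjacent to `s`, to the new
leaf `Sum.inr 2`, to the root `Sum.inr 3` of a new fork (with center `Sum.inr 4` and leaves
`Sum.inr 5`, `Sum.inr 6`), and to the old root of `T`. -/
def consC (T : RGraph) : RGraph where
  V := T.V ⊕ Fin 7
  G := SimpleGraph.fromRel (fun a b =>
    (∃ x y, T.G.Adj x y ∧ a = Sum.inl x ∧ b = Sum.inl y) ∨
    (a = Sum.inr 0 ∧ b = Sum.inr 1) ∨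
    (a = Sum.inr 1 ∧ b = Sum.inr 2) ∨
    (a = Sum.inr 1 ∧ b = Sum.inr 3) ∨
    (a = Sum.inr 3 ∧ b = Sum.inr 4) ∨
    (a = Sum.inr 4 ∧ b = Sum.inr 5) ∨
    (a = Sum.inr 4 ∧ b = Sum.inr 6) ∨
    (a = Sum.inr 1 ∧ b = Sum.inl T.root))
  root := Sum.inr 0

/-- `hang T S`: the disjoint union of rooted graphs `T` and `S` together with an edge
joining their roots; the root of the result is the root of `T`. -/
def hang (T S : RGraph) : RGraph where
  V := T.V ⊕ S.V
  G := SimpleGraph.fromRel (fun a b =>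
    (∃ x y, T.G.Adj x y ∧ a = Sum.inl x ∧ b = Sum.inl y) ∨
    (∃ x y, S.G.Adj x y ∧ a = Sum.inr x ∧ b = Sum.inr y) ∨
    (a = Sum.inl T.root ∧ b = Sum.inr S.root))
  root := Sum.inl T.root

/-- The rooted subtree of `G` cut off by the edge `st` on the side of `s`, rooted at `s`. -/
def sideRG {V : Type} (G : SimpleGraph V) (s t : V) : RGraph :=
  ⟨sideSet G s t, sideGraph G s t, sideRoot G s t⟩

/-- `y` lies on the path from `x` to the root of `T`. -/
def OnRootPath (T : RGraph) (x y : T.V) : Prop := ∀ p : T.G.Walk x T.root, y ∈ p.support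

/-- The rooted graph `T` contains a `k`-claw: either `T` itself is a `k`-claw, or
there is an edge `xy` of `T` with `y` on the path from `x` to the root such that
the component of `x` in `T − xy`, rooted at `x`, is a `k`-claw. -/
def ContainsClaw (T : RGraph) (k : ℕ) : Prop :=
  T.RIso (claw k) ∨
  ∃ x y : T.V, T.G.Adj x y ∧ OnRootPath T x y ∧ (sideRG T.G x y).RIso (claw k)

/-- The vertex set of the branch of the rooted graph `(G, r)` containing the
neighbour `x` of `r`: all vertices reachable from `x` avoiding `r`. -/
def branchSet {V : Type} (G : SimpleGraph V) (r x : V) : Set V :=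
  {v | ∃ p : G.Walk x v, r ∉ p.support}

/-- `m` of the branch of `(G, r)` at the neighbour `x`. -/
noncomputable def branchM {V : Type} (G : SimpleGraph V) (r x : V) : ℕ :=
  mm (G.induce (branchSet G r x))

/-- `m_0` of the branch of `(G, r)` at the neighbour `x` (the branch is rooted at `x`). -/
noncomputable def branchM0 {V : Type} (G : SimpleGraph V) (r x : V) : ℕ :=
  mm (G.induce (branchSet G r x \ {x}))

/-- The branch of `(G, r)` at the neighbour `x`, rooted at `x`, is of type A. -/
def BranchTypeA {V : Type} (G : SimpleGraph V) (r x : V) : Prop :=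
  ∃ h : x ∈ branchSet G r x, TypeA (G.induce (branchSet G r x)) ⟨x, h⟩

/-- The branch of `(G, r)` at the neighbour `x`, rooted at `x`, is of type B. -/
def BranchTypeB {V : Type} (G : SimpleGraph V) (r x : V) : Prop :=
  ∃ h : x ∈ branchSet G r x, TypeB (G.induce (branchSet G r x)) ⟨x, h⟩

/-- The bipartition condition for rooted trees: a one-vertex rooted tree fulfils it,
and a rooted tree fulfils it if all of its branches (each rooted at the corresponding
neighbour of the root) fulfil it and have type different from the type of the root. -/
inductive BipCond : {V : Type} → SimpleGraph V → V → Prop where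
  | single {V : Type} (G : SimpleGraph V) (r : V) (h : ∀ v : V, v = r) : BipCond G r
  | node {V : Type} (G : SimpleGraph V) (r : V)
      (hrec : ∀ (x : V), G.Adj r x → ∀ (hm : x ∈ branchSet G r x),
        BipCond (G.induce (branchSet G r x)) ⟨x, hm⟩)
      (htype : ∀ (x : V), G.Adj r x → ∀ (hm : x ∈ branchSet G r x),
        ¬ (TypeA G r ↔ TypeA (G.induce (branchSet G r x)) ⟨x, hm⟩)) :
      BipCond G r

/-- The integer sequence `G_j` with `G_0 = 0`, `G_1 = 1`, `G_{j+2} = 11 G_{j+1} − 9 G_j`. -/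
def Gseq : ℕ → ℤ
  | 0 => 0
  | 1 => 1
  | (n + 2) => 11 * Gseq (n + 1) - 9 * Gseq n

/-- Attach one new pendant vertex to the vertex `w` of `H`. -/
def addLeaf {W : Type} (H : SimpleGraph W) (w : W) : SimpleGraph (W ⊕ Unit) :=
  SimpleGraph.fromRel (fun a b =>
    (∃ x y, H.Adj x y ∧ a = Sum.inl x ∧ b = Sum.inl y) ∨
    (a = Sum.inl w ∧ b = Sum.inr ()))

/-- The 6-vertex spider with legs of lengths 1, 1 and 3 attached to the center `0`. -/
def spider6 : SimpleGraph (Fin 6) :=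
  SimpleGraph.fromRel (fun a b =>
    (a = 0 ∧ b = 1) ∨ (a = 0 ∧ b = 2) ∨ (a = 0 ∧ b = 3) ∨ (a = 3 ∧ b = 4) ∨ (a = 4 ∧ b = 5))


section Aux

variable {V : Type} [Finite V]
set_option linter.unusedSectionVars false

lemma isMatchingSet_empty (G : SimpleGraph V) : IsMatchingSet G ∅ :=
  ⟨Set.empty_subset _, Set.pairwise_empty _⟩

lemma isMatchingSet_mono {G : SimpleGraph V} {M N : Set (Sym2 V)} (h : N ⊆ M)
    (hM : IsMatchingSet G M) : IsMatchingSet G N :=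
  ⟨h.trans hM.1, hM.2.mono h⟩

lemma bddP (P : Set (Set (Sym2 V))) : BddAbove {n | ∃ N ∈ P, N.ncard = n} := by
  refine ⟨(Set.univ : Set (Sym2 V)).ncard, ?_⟩
  rintro n ⟨N, _, rfl⟩
  exact Set.ncard_le_ncard (Set.subset_univ N) Set.finite_univ

lemma exists_max (P : Set (Set (Sym2 V))) (hne : P.Nonempty) :
    ∃ N ∈ P, N.ncard = sSup {n | ∃ N ∈ P, N.ncard = n} := by
  have h1 : {n | ∃ N ∈ P, N.ncard = n}.Nonempty :=
    ⟨hne.choose.ncard, hne.choose, hne.choose_spec, rfl⟩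
  exact Nat.sSup_mem h1 (bddP P)

lemma le_max {P : Set (Set (Sym2 V))} {N : Set (Sym2 V)} (hN : N ∈ P) :
    N.ncard ≤ sSup {n | ∃ N ∈ P, N.ncard = n} :=
  le_csSup (bddP P) ⟨N, hN, rfl⟩

lemma matchNum_eq (G : SimpleGraph V) :
    matchNum G = sSup {n | ∃ N ∈ {M | IsMatchingSet G M}, N.ncard = n} := rfl

lemma ncard_le_matchNum {G : SimpleGraph V} {M : Set (Sym2 V)} (h : IsMatchingSet G M) :
    M.ncard ≤ matchNum G := by
  rw [matchNum_eq]; exact le_max h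

lemma exists_maximum (G : SimpleGraph V) : ∃ M, M ∈ MaximumMatchings G := by
  obtain ⟨N, hN, hcard⟩ := exists_max {M | IsMatchingSet G M} ⟨∅, isMatchingSet_empty G⟩
  exact ⟨N, hN, hcard⟩

/-- Matchings of `D` all of whose edges have all endpoints in `S`. -/
def SuppM (D : SimpleGraph V) (S : Set V) : Set (Set (Sym2 V)) :=
  {N | IsMatchingSet D N ∧ ∀ e ∈ N, ∀ v ∈ e, v ∈ S}

noncomputable def smu (D : SimpleGraph V) (S : Set V) : ℕ :=
  sSup {n | ∃ N ∈ SuppM D S, N.ncard = n}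

lemma suppM_nonempty (D : SimpleGraph V) (S : Set V) : (SuppM D S).Nonempty :=
  ⟨∅, isMatchingSet_empty D, by simp⟩

lemma exists_smu (D : SimpleGraph V) (S : Set V) :
    ∃ N ∈ SuppM D S, N.ncard = smu D S :=
  exists_max _ (suppM_nonempty D S)

lemma le_smu {D : SimpleGraph V} {S : Set V} {N : Set (Sym2 V)} (hN : N ∈ SuppM D S) :
    N.ncard ≤ smu D S := le_max hN

/-- Lift a set of edges over a subtype to the ambient type. -/
def liftE (S : Set V) (M : Set (Sym2 ↥S)) : Set (Sym2 V) :=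
  (Sym2.map (Subtype.val : S → V)) '' M

lemma liftE_injective (S : Set V) : Function.Injective (liftE S) :=
  Set.image_injective.2 (Sym2.map.injective Subtype.val_injective)

lemma liftE_ncard (S : Set V) (M : Set (Sym2 ↥S)) : (liftE S M).ncard = M.ncard :=
  Set.ncard_image_of_injective _ (Sym2.map.injective Subtype.val_injective)

lemma liftE_edge (D : SimpleGraph V) (S : Set V) (e : Sym2 ↥S) :
    Sym2.map Subtype.val e ∈ D.edgeSet ↔ e ∈ (D.induce S).edgeSet := by
  induction e using Sym2.ind with
  | _ a b => simp [SimpleGraph.mem_edgeSet]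

lemma isMatchingSet_liftE_iff {D : SimpleGraph V} {S : Set V} {M : Set (Sym2 ↥S)} :
    IsMatchingSet (D.induce S) M ↔ IsMatchingSet D (liftE S M) := by
  have hinj : Function.Injective (Sym2.map (Subtype.val : S → V)) :=
    Sym2.map.injective Subtype.val_injective
  constructor
  · rintro ⟨hsub, hpw⟩
    constructor
    · rintro e' ⟨e, he, rfl⟩
      exact (liftE_edge D S e).2 (hsub he)
    · rintro e' ⟨e, he, rfl⟩ f' ⟨f, hf, rfl⟩ hne v ⟨hv1, hv2⟩
      obtain ⟨a, ha, rfl⟩ := Sym2.mem_map.1 hv1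
      obtain ⟨b, hb, hba⟩ := Sym2.mem_map.1 hv2
      have hab : b = a := Subtype.val_injective hba
      subst hab
      exact hpw he hf (fun h => hne (by rw [h])) b ⟨ha, hb⟩
  · rintro ⟨hsub, hpw⟩
    constructor
    · intro e he
      exact (liftE_edge D S e).1 (hsub ⟨e, he, rfl⟩)
    · rintro e he f hf hne v ⟨hv1, hv2⟩
      exact hpw ⟨e, he, rfl⟩ ⟨f, hf, rfl⟩ (fun h => hne (hinj h)) v.1
        ⟨Sym2.mem_map.2 ⟨v, hv1, rfl⟩, Sym2.mem_map.2 ⟨v, hv2, rfl⟩⟩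

lemma liftE_supported (S : Set V) (M : Set (Sym2 ↥S)) :
    ∀ e ∈ liftE S M, ∀ v ∈ e, v ∈ S := by
  rintro e' ⟨e, _, rfl⟩ v hv
  obtain ⟨a, _, rfl⟩ := Sym2.mem_map.1 hv
  exact a.2

lemma liftE_surj {S : Set V} {N : Set (Sym2 V)} (hN : ∀ e ∈ N, ∀ v ∈ e, v ∈ S) :
    ∃ M, liftE S M = N := by
  refine ⟨{e | Sym2.map Subtype.val e ∈ N}, ?_⟩
  ext e
  simp only [liftE, Set.mem_image, Set.mem_setOf_eq]
  constructor
  · rintro ⟨f, hf, rfl⟩; exact hf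
  · intro he
    induction e using Sym2.ind with
    | _ u v =>
      have hu : u ∈ S := hN _ he u (Sym2.mem_mk_left u v)
      have hv : v ∈ S := hN _ he v (Sym2.mem_mk_right u v)
      exact ⟨s(⟨u, hu⟩, ⟨v, hv⟩), by simpa using he, by simp⟩

lemma matchNum_induce (D : SimpleGraph V) (S : Set V) :
    matchNum (D.induce S) = smu D S := by
  rw [matchNum_eq, smu]
  congr 1
  ext n
  constructor
  · rintro ⟨M, hM, rfl⟩
    exact ⟨liftE S M, ⟨isMatchingSet_liftE_iff.1 hM, liftE_supported S M⟩,
      liftE_ncard S M⟩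
  · rintro ⟨N, ⟨hN, hNs⟩, rfl⟩
    obtain ⟨M, rfl⟩ := liftE_surj hNs
    exact ⟨M, isMatchingSet_liftE_iff.2 hN, (liftE_ncard S M).symm⟩

lemma mm_induce (D : SimpleGraph V) (S : Set V) :
    mm (D.induce S) = {N | N ∈ SuppM D S ∧ N.ncard = smu D S}.ncard := by
  have himg : liftE S '' MaximumMatchings (D.induce S)
      = {N | N ∈ SuppM D S ∧ N.ncard = smu D S} := by
    ext N
    constructor
    · rintro ⟨M, ⟨hM, hMc⟩, rfl⟩
      exact ⟨⟨isMatchingSet_liftE_iff.1 hM, liftE_supported S M⟩,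
        by rw [liftE_ncard, hMc, matchNum_induce]⟩
    · rintro ⟨⟨hN, hNs⟩, hNc⟩
      obtain ⟨M, rfl⟩ := liftE_surj hNs
      exact ⟨M, ⟨isMatchingSet_liftE_iff.2 hN,
        by rw [← liftE_ncard S M, hNc, matchNum_induce]⟩, rfl⟩
  rw [mm, ← Set.ncard_image_of_injective _ (liftE_injective S), himg]

lemma ncard_prod {α β : Type*} (S : Set α) (T : Set β) :
    (S ×ˢ T).ncard = S.ncard * T.ncard := by
  rw [← Nat.card_coe_set_eq, ← Nat.card_coe_set_eq, ← Nat.card_coe_set_eq,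
    Nat.card_congr (Equiv.Set.prod S T), Nat.card_prod]

end Aux


section Aux2

variable {V : Type} [Finite V]
set_option linter.unusedSectionVars false

lemma sym2_exists_mem (e : Sym2 V) : ∃ v, v ∈ e := by
  induction e using Sym2.ind with
  | _ u v => exact ⟨u, Sym2.mem_mk_left u v⟩

lemma suppM_mono {D : SimpleGraph V} {S T : Set V} (hST : S ⊆ T) {N : Set (Sym2 V)}
    (hN : N ∈ SuppM D S) : N ∈ SuppM D T :=
  ⟨hN.1, fun e he v hv => hST (hN.2 e he v hv)⟩

lemma union_suppM {D : SimpleGraph V} {A B : Set V}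
    (hdisj : ∀ v, v ∈ A → v ∈ B → False)
    {NA NB : Set (Sym2 V)} (hA : NA ∈ SuppM D A) (hB : NB ∈ SuppM D B) :
    IsMatchingSet D (NA ∪ NB) ∧ (NA ∪ NB).ncard = NA.ncard + NB.ncard := by
  have hcross : ∀ e ∈ NA, ∀ f ∈ NB, ∀ v : V, ¬(v ∈ e ∧ v ∈ f) := by
    rintro e he f hf v ⟨hv1, hv2⟩
    exact hdisj v (hA.2 e he v hv1) (hB.2 f hf v hv2)
  have hdisjN : Disjoint NA NB := by
    rw [Set.disjoint_left]
    intro e heA heB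
    obtain ⟨v, hv⟩ := sym2_exists_mem e
    exact hcross e heA e heB v ⟨hv, hv⟩
  refine ⟨⟨Set.union_subset hA.1.1 hB.1.1, ?_⟩, Set.ncard_union_eq hdisjN⟩
  exact Set.pairwise_union.2 ⟨hA.1.2, hB.1.2, fun e he f hf _ =>
    ⟨hcross e he f hf, fun v ⟨h1, h2⟩ => hcross e he f hf v ⟨h2, h1⟩⟩⟩

lemma split_suppM {D : SimpleGraph V} {A B : Set V}
    (hedge : ∀ e ∈ D.edgeSet, (∀ v ∈ e, v ∈ A) ∨ (∀ v ∈ e, v ∈ B))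
    {N : Set (Sym2 V)} (hN : IsMatchingSet D N) :
    ∃ NA NB, NA ∈ SuppM D A ∧ NB ∈ SuppM D B ∧ N = NA ∪ NB ∧
      NA.ncard + NB.ncard = N.ncard ∧ NA ⊆ N ∧ NB ⊆ N := by
  set NA := {e ∈ N | ∀ v ∈ e, v ∈ A} with hNA
  set NB := {e ∈ N | ¬ ∀ v ∈ e, v ∈ A} with hNB
  have hAsub : NA ⊆ N := Set.sep_subset _ _
  have hBsub : NB ⊆ N := Set.sep_subset _ _
  have hunion : N = NA ∪ NB := by
    ext e; simp only [hNA, hNB, Set.mem_union, Set.mem_setOf_eq]; tauto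
  have hdisjN : Disjoint NA NB := by
    rw [Set.disjoint_left]; rintro e ⟨_, h1⟩ ⟨_, h2⟩; exact h2 h1
  refine ⟨NA, NB, ⟨isMatchingSet_mono hAsub hN, fun e he => he.2⟩,
    ⟨isMatchingSet_mono hBsub hN, fun e he => ?_⟩, hunion, ?_, hAsub, hBsub⟩
  · rcases hedge e (hN.1 (hBsub he)) with h | h
    · exact absurd h he.2
    · exact h
  · rw [hunion, Set.ncard_union_eq hdisjN]

lemma at_most_one_covering {D : SimpleGraph V} {N : Set (Sym2 V)}
    (hN : IsMatchingSet D N) (t : V) : N.ncard ≤ {e ∈ N | t ∉ e}.ncard + 1 := by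
  have hsub : N ⊆ {e ∈ N | t ∉ e} ∪ {e ∈ N | t ∈ e} := by
    intro e he; by_cases h : t ∈ e
    · exact Or.inr ⟨he, h⟩
    · exact Or.inl ⟨he, h⟩
  have h1 : {e ∈ N | t ∈ e}.ncard ≤ 1 := by
    rw [Set.ncard_le_one]
    rintro e ⟨he, hte⟩ f ⟨hf, htf⟩
    by_contra hne
    exact hN.2 he hf hne t ⟨hte, htf⟩
  calc N.ncard ≤ ({e ∈ N | t ∉ e} ∪ {e ∈ N | t ∈ e}).ncard :=
        Set.ncard_le_ncard hsub
    _ ≤ {e ∈ N | t ∉ e}.ncard + {e ∈ N | t ∈ e}.ncard := Set.ncard_union_le _ _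
    _ ≤ {e ∈ N | t ∉ e}.ncard + 1 := by omega

end Aux2

section Aux3

variable {V : Type} [Fintype V]
set_option linter.unusedSectionVars false

lemma side_structure (G : SimpleGraph V) (htree : G.IsTree) (s t : V) (hadj : G.Adj s t) :
    (∀ v, v ∈ sideSet G s t ∨ v ∈ sideSet G t s) ∧
    (∀ v, v ∈ sideSet G s t → v ∈ sideSet G t s → False) ∧
    (∀ e ∈ (G.deleteEdges {s(s, t)}).edgeSet,
      (∀ v ∈ e, v ∈ sideSet G s t) ∨ (∀ v ∈ e, v ∈ sideSet G t s)) := by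
  set D := G.deleteEdges {s(s, t)} with hD
  have hswap : G.deleteEdges {s(t, s)} = D := by
    rw [hD, show s(t, s) = s(s, t) from Sym2.eq_swap]
  have hmemA : ∀ v, v ∈ sideSet G s t ↔ D.Reachable s v := fun v => Iff.rfl
  have hmemB : ∀ v, v ∈ sideSet G t s ↔ D.Reachable t v := by
    intro v; unfold sideSet; rw [hswap]; exact Iff.rfl
  have hnr : ¬ D.Reachable s t := by
    have hb : G.IsBridge (s(s, t)) :=
      (isAcyclic_iff_forall_adj_isBridge.1 htree.2) hadj
    exact isBridge_iff.1 hb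
  have hdisj : ∀ v, v ∈ sideSet G s t → v ∈ sideSet G t s → False := by
    intro v ha hb
    exact hnr (((hmemA v).1 ha).trans ((hmemB v).1 hb).symm)
  have hprop : ∀ u w : V, D.Adj u w → (u ∈ sideSet G s t → w ∈ sideSet G s t) ∧
      (u ∈ sideSet G t s → w ∈ sideSet G t s) := by
    intro u w h
    constructor
    · intro hu; exact (hmemA w).2 (((hmemA u).1 hu).trans h.reachable)
    · intro hu; exact (hmemB w).2 (((hmemB u).1 hu).trans h.reachable)
  have hcover : ∀ v, v ∈ sideSet G s t ∨ v ∈ sideSet G t s := by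
    have key : ∀ (u v : V) (_ : G.Walk u v),
        (u ∈ sideSet G s t ∨ u ∈ sideSet G t s) →
        (v ∈ sideSet G s t ∨ v ∈ sideSet G t s) := by
      intro u v p
      induction p with
      | nil => exact id
      | @cons a b c h p ih =>
        intro hu
        refine ih ?_
        by_cases he : s(a, b) = s(s, t)
        · rcases Sym2.eq_iff.1 he with ⟨ha, hb⟩ | ⟨ha, hb⟩
          · refine Or.inr ((hmemB b).2 ?_); rw [hb]
          · refine Or.inl ((hmemA b).2 ?_); rw [hb]
        · have hDab : D.Adj a b := by
            rw [hD, SimpleGraph.deleteEdges_adj]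
            exact ⟨h, by simpa using he⟩
          rcases hu with hu | hu
          · exact Or.inl ((hprop a b hDab).1 hu)
          · exact Or.inr ((hprop a b hDab).2 hu)
    intro v
    obtain ⟨p⟩ := htree.1.preconnected s v
    exact key s v p (Or.inl ((hmemA s).2 (SimpleGraph.Reachable.refl s)))
  refine ⟨hcover, hdisj, ?_⟩
  intro e he
  induction e using Sym2.ind with
  | _ u w =>
    have hAdj : D.Adj u w := he
    rcases hcover u with hu | hu
    · refine Or.inl ?_
      have hw := (hprop u w hAdj).1 hu
      intro v hv
      rcases Sym2.mem_iff.1 hv with rfl | rfl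
      · exact hu
      · exact hw
    · refine Or.inr ?_
      have hw := (hprop u w hAdj).2 hu
      intro v hv
      rcases Sym2.mem_iff.1 hv with rfl | rfl
      · exact hu
      · exact hw

end Aux3

section Aux4

variable {V : Type} [Finite V]
set_option linter.unusedSectionVars false

lemma union_suppM_injOn {D : SimpleGraph V} {A B : Set V}
    (hdisj : ∀ v, v ∈ A → v ∈ B → False)
    {NA NB NA' NB' : Set (Sym2 V)} (hNA : NA ∈ SuppM D A) (hNB : NB ∈ SuppM D B)
    (hNA' : NA' ∈ SuppM D A) (hNB' : NB' ∈ SuppM D B)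
    (h : NA ∪ NB = NA' ∪ NB') : NA = NA' ∧ NB = NB' := by
  have keyA : ∀ (MA MB : Set (Sym2 V)), MA ∈ SuppM D A → MB ∈ SuppM D B →
      {e ∈ MA ∪ MB | ∀ v ∈ e, v ∈ A} = MA := by
    intro MA MB hMA hMB
    ext e
    constructor
    · rintro ⟨he | he, hall⟩
      · exact he
      · obtain ⟨v, hv⟩ := sym2_exists_mem e
        exact absurd (hall v hv) (fun hvA => hdisj v hvA (hMB.2 e he v hv))
    · intro he; exact ⟨Or.inl he, hMA.2 e he⟩
  have keyB : ∀ (MA MB : Set (Sym2 V)), MA ∈ SuppM D A → MB ∈ SuppM D B →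
      {e ∈ MA ∪ MB | ¬ ∀ v ∈ e, v ∈ A} = MB := by
    intro MA MB hMA hMB
    ext e
    constructor
    · rintro ⟨he | he, hall⟩
      · exact absurd (hMA.2 e he) hall
      · exact he
    · intro he
      refine ⟨Or.inr he, fun hall => ?_⟩
      obtain ⟨v, hv⟩ := sym2_exists_mem e
      exact hdisj v (hall v hv) (hMB.2 e he v hv)
  constructor
  · rw [← keyA NA NB hNA hNB, ← keyA NA' NB' hNA' hNB', h]
  · rw [← keyB NA NB hNA hNB, ← keyB NA' NB' hNA' hNB', h]

end Aux4

lemma core {V : Type} [Fintype V] (G D : SimpleGraph V) (s t : V) (est : Sym2 V)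
    (A B : Set V)
    (hadj : G.Adj s t)
    (hDG : D.edgeSet = G.edgeSet \ {est})
    (hestG : est ∈ G.edgeSet)
    (hs_est : s ∈ est) (ht_est : t ∈ est) (hv_est : ∀ v ∈ est, v = s ∨ v = t)
    (hdisj : ∀ v, v ∈ A → v ∈ B → False)
    (hedge : ∀ e ∈ D.edgeSet, (∀ v ∈ e, v ∈ A) ∨ (∀ v ∈ e, v ∈ B))
    (hsA : s ∈ A) (htB : t ∈ B)
    (hA : TypeA G s) :
    TypeB G t ∧
    smu D (A \ {s}) = smu D A ∧
    smu D B = smu D (B \ {t}) + 1 ∧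
    matchNum G = smu D A + smu D B ∧
    mm G = {N | N ∈ SuppM D A ∧ N.ncard = smu D A}.ncard *
        {N | N ∈ SuppM D B ∧ N.ncard = smu D B}.ncard +
      {N | N ∈ SuppM D (A \ {s}) ∧ N.ncard = smu D (A \ {s})}.ncard *
        {N | N ∈ SuppM D (B \ {t}) ∧ N.ncard = smu D (B \ {t})}.ncard := by
  classical
  have htA : t ∉ A := fun h => hdisj t h htB
  have hsB : s ∉ B := fun h => hdisj s hsA h
  have hDsub : D.edgeSet ⊆ G.edgeSet := by rw [hDG]; exact Set.diff_subset
  have hdisj' : ∀ v, v ∈ A \ {s} → v ∈ B \ {t} → False := fun v h1 h2 => hdisj v h1.1 h2.1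
  -- construction 1
  have con1 : ∀ NA ∈ SuppM D A, ∀ NB ∈ SuppM D B,
      IsMatchingSet G (NA ∪ NB) ∧ (NA ∪ NB).ncard = NA.ncard + NB.ncard ∧ est ∉ NA ∪ NB := by
    intro NA hNA NB hNB
    obtain ⟨hm, hc⟩ := union_suppM hdisj hNA hNB
    refine ⟨⟨hm.1.trans hDsub, hm.2⟩, hc, ?_⟩
    rintro (h | h)
    · exact htA (hNA.2 est h t ht_est)
    · exact hsB (hNB.2 est h s hs_est)
  -- est not in supported unions for the primed sides
  have hnotin : ∀ NA ∈ SuppM D (A \ {s}), ∀ NB ∈ SuppM D (B \ {t}), est ∉ NA ∪ NB := by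
    rintro NA hNA NB hNB (h | h)
    · exact (hNA.2 est h s hs_est).2 rfl
    · exact (hNB.2 est h t ht_est).2 rfl
  -- construction 2
  have con2 : ∀ NA ∈ SuppM D (A \ {s}), ∀ NB ∈ SuppM D (B \ {t}),
      IsMatchingSet G (insert est (NA ∪ NB)) ∧
      (insert est (NA ∪ NB)).ncard = NA.ncard + NB.ncard + 1 := by
    intro NA hNA NB hNB
    obtain ⟨hm, hc⟩ := union_suppM hdisj' hNA hNB
    have hcr : ∀ e ∈ NA ∪ NB, ∀ v : V, ¬(v ∈ est ∧ v ∈ e) := by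
      rintro e he v ⟨hv1, hv2⟩
      have hv1' : v = s ∨ v = t := hv_est v hv1
      rcases he with he | he
      · have hmem := hNA.2 e he v hv2
        rcases hv1' with rfl | rfl
        · exact hmem.2 rfl
        · exact htA hmem.1
      · have hmem := hNB.2 e he v hv2
        rcases hv1' with rfl | rfl
        · exact hsB hmem.1
        · exact hmem.2 rfl
    refine ⟨⟨Set.insert_subset hestG (hm.1.trans hDsub), ?_⟩, ?_⟩
    · refine Set.pairwise_insert.2 ⟨hm.2, ?_⟩
      intro e he _
      exact ⟨hcr e he, fun v ⟨h1, h2⟩ => hcr e he v ⟨h2, h1⟩⟩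
    · rw [Set.ncard_insert_of_notMem (hnotin NA hNA NB hNB), hc]
  -- decomposition 1
  have dec1 : ∀ M, IsMatchingSet G M → est ∉ M →
      ∃ NA NB, NA ∈ SuppM D A ∧ NB ∈ SuppM D B ∧ M = NA ∪ NB ∧
        NA.ncard + NB.ncard = M.ncard ∧ NA ⊆ M ∧ NB ⊆ M := by
    intro M hM hestM
    have hMD : IsMatchingSet D M := by
      refine ⟨?_, hM.2⟩
      intro e he
      rw [hDG]
      exact ⟨hM.1 he, fun h => hestM (Set.mem_singleton_iff.1 h ▸ he)⟩
    exact split_suppM hedge hMD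
  -- decomposition 2
  have dec2 : ∀ M, IsMatchingSet G M → est ∈ M →
      ∃ NA NB, NA ∈ SuppM D (A \ {s}) ∧ NB ∈ SuppM D (B \ {t}) ∧
        M = insert est (NA ∪ NB) ∧ NA.ncard + NB.ncard + 1 = M.ncard := by
    intro M hM hestM
    have hM'sub : M \ {est} ⊆ M := Set.diff_subset
    have hM'D : IsMatchingSet D (M \ {est}) := by
      refine ⟨?_, hM.2.mono hM'sub⟩
      intro e he
      rw [hDG]
      exact ⟨hM.1 he.1, he.2⟩
    have havoid : ∀ e ∈ M \ {est}, ∀ v ∈ e, v ≠ s ∧ v ≠ t := by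
      intro e he v hv
      have hne : est ≠ e := fun h => he.2 (Set.mem_singleton_iff.2 h.symm)
      have hpw := hM.2 hestM (hM'sub he) hne
      constructor
      · rintro rfl; exact hpw v ⟨hs_est, hv⟩
      · rintro rfl; exact hpw v ⟨ht_est, hv⟩
    obtain ⟨NA, NB, hNA, hNB, hun, hcard, hNAsub, hNBsub⟩ := split_suppM hedge hM'D
    refine ⟨NA, NB,
      ⟨hNA.1, fun e he v hv => ⟨hNA.2 e he v hv, (havoid e (hNAsub he) v hv).1⟩⟩,
      ⟨hNB.1, fun e he v hv => ⟨hNB.2 e he v hv, (havoid e (hNBsub he) v hv).2⟩⟩, ?_, ?_⟩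
    · rw [← hun, Set.insert_diff_singleton, Set.insert_eq_of_mem hestM]
    · have h1 : (M \ {est}).ncard + 1 = M.ncard := Set.ncard_diff_singleton_add_one hestM
      omega
  -- numeric bounds
  have lb1 : smu D A + smu D B ≤ matchNum G := by
    obtain ⟨NA, hNA, hcA⟩ := exists_smu D A
    obtain ⟨NB, hNB, hcB⟩ := exists_smu D B
    obtain ⟨hm, hc, _⟩ := con1 NA hNA NB hNB
    calc smu D A + smu D B = (NA ∪ NB).ncard := by rw [hc, hcA, hcB]
      _ ≤ matchNum G := ncard_le_matchNum hm
  have lb2 : smu D (A \ {s}) + smu D (B \ {t}) + 1 ≤ matchNum G := by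
    obtain ⟨NA, hNA, hcA⟩ := exists_smu D (A \ {s})
    obtain ⟨NB, hNB, hcB⟩ := exists_smu D (B \ {t})
    obtain ⟨hm, hc⟩ := con2 NA hNA NB hNB
    calc smu D (A \ {s}) + smu D (B \ {t}) + 1 = (insert est (NA ∪ NB)).ncard := by rw [hc, hcA, hcB]
      _ ≤ matchNum G := ncard_le_matchNum hm
  have hA'le : smu D (A \ {s}) ≤ smu D A := by
    obtain ⟨N, hN, hc⟩ := exists_smu D (A \ {s})
    rw [← hc]
    exact le_smu (suppM_mono Set.diff_subset hN)
  have hBle : smu D B ≤ smu D (B \ {t}) + 1 := by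
    obtain ⟨N, hN, hc⟩ := exists_smu D B
    have h1 := at_most_one_covering hN.1 t
    have hN' : {e ∈ N | t ∉ e} ∈ SuppM D (B \ {t}) :=
      ⟨isMatchingSet_mono (Set.sep_subset _ _) hN.1,
        fun e he v hv => ⟨hN.2 e he.1 v hv, fun hvt => he.2 (hvt ▸ hv)⟩⟩
    calc smu D B = N.ncard := hc.symm
      _ ≤ {e ∈ N | t ∉ e}.ncard + 1 := h1
      _ ≤ smu D (B \ {t}) + 1 := Nat.add_le_add_right (le_smu hN') 1
  -- use TypeA s
  obtain ⟨M0, hM0max, hM0s⟩ := hA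
  have hestM0 : est ∉ M0 := fun h => hM0s ⟨est, h, hs_est⟩
  obtain ⟨NA0, NB0, hNA0, hNB0, _, hsum0, hNA0sub, _⟩ := dec1 M0 hM0max.1 hestM0
  have hNA0' : NA0 ∈ SuppM D (A \ {s}) :=
    ⟨hNA0.1, fun e he v hv => ⟨hNA0.2 e he v hv, fun h => hM0s ⟨e, hNA0sub he, h ▸ hv⟩⟩⟩
  have key1 : matchNum G ≤ smu D (A \ {s}) + smu D B := by
    rw [← hM0max.2, ← hsum0]
    exact Nat.add_le_add (le_smu hNA0') (le_smu hNB0)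
  have hμG : matchNum G = smu D A + smu D B := by omega
  have hA'eq : smu D (A \ {s}) = smu D A := by omega
  have hB'eq : smu D B = smu D (B \ {t}) + 1 := by omega
  -- type B of t
  have htypeB : TypeB G t := by
    rintro ⟨M1, hM1max, hM1t⟩
    have hestM1 : est ∉ M1 := fun h => hM1t ⟨est, h, ht_est⟩
    obtain ⟨NA1, NB1, hNA1, hNB1, _, hsum1, _, hNB1sub⟩ := dec1 M1 hM1max.1 hestM1
    have hNB1' : NB1 ∈ SuppM D (B \ {t}) :=
      ⟨hNB1.1, fun e he v hv => ⟨hNB1.2 e he v hv, fun h => hM1t ⟨e, hNB1sub he, h ▸ hv⟩⟩⟩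
    have hcontra : matchNum G ≤ smu D A + smu D (B \ {t}) := by
      rw [← hM1max.2, ← hsum1]
      exact Nat.add_le_add (le_smu hNA1) (le_smu hNB1')
    omega
  -- counting
  have hMM : MaximumMatchings G =
      (fun p : Set (Sym2 V) × Set (Sym2 V) => p.1 ∪ p.2) '' ({N | N ∈ SuppM D A ∧ N.ncard = smu D A} ×ˢ {N | N ∈ SuppM D B ∧ N.ncard = smu D B}) ∪
      (fun p : Set (Sym2 V) × Set (Sym2 V) => insert est (p.1 ∪ p.2)) '' ({N | N ∈ SuppM D (A \ {s}) ∧ N.ncard = smu D (A \ {s})} ×ˢ {N | N ∈ SuppM D (B \ {t}) ∧ N.ncard = smu D (B \ {t})}) := by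
    ext M
    constructor
    · rintro ⟨hM, hMc⟩
      by_cases hin : est ∈ M
      · obtain ⟨NA, NB, hNA, hNB, hun, hsum⟩ := dec2 M hM hin
        have h1 : NA.ncard ≤ smu D (A \ {s}) := le_smu hNA
        have h2 : NB.ncard ≤ smu D (B \ {t}) := le_smu hNB
        have heq : NA.ncard = smu D (A \ {s}) ∧ NB.ncard = smu D (B \ {t}) := by omega
        exact Or.inr ⟨(NA, NB), ⟨⟨hNA, heq.1⟩, hNB, heq.2⟩, hun.symm⟩
      · obtain ⟨NA, NB, hNA, hNB, hun, hsum, _, _⟩ := dec1 M hM hin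
        have h1 : NA.ncard ≤ smu D A := le_smu hNA
        have h2 : NB.ncard ≤ smu D B := le_smu hNB
        have heq : NA.ncard = smu D A ∧ NB.ncard = smu D B := by omega
        exact Or.inl ⟨(NA, NB), ⟨⟨hNA, heq.1⟩, hNB, heq.2⟩, hun.symm⟩
    · rintro (⟨⟨NA, NB⟩, ⟨⟨hNA, hcA⟩, hNB, hcB⟩, rfl⟩ | ⟨⟨NA, NB⟩, ⟨⟨hNA, hcA⟩, hNB, hcB⟩, rfl⟩)
      · obtain ⟨hm, hc, _⟩ := con1 NA hNA NB hNB
        exact ⟨hm, by rw [hc, hcA, hcB, hμG]⟩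
      · obtain ⟨hm, hc⟩ := con2 NA hNA NB hNB
        refine ⟨hm, ?_⟩
        rw [hc, hcA, hcB]
        omega
  have hdisjIm : Disjoint
      ((fun p : Set (Sym2 V) × Set (Sym2 V) => p.1 ∪ p.2) '' ({N | N ∈ SuppM D A ∧ N.ncard = smu D A} ×ˢ {N | N ∈ SuppM D B ∧ N.ncard = smu D B}))
      ((fun p : Set (Sym2 V) × Set (Sym2 V) => insert est (p.1 ∪ p.2)) '' ({N | N ∈ SuppM D (A \ {s}) ∧ N.ncard = smu D (A \ {s})} ×ˢ {N | N ∈ SuppM D (B \ {t}) ∧ N.ncard = smu D (B \ {t})})) := by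
    rw [Set.disjoint_left]
    rintro M ⟨⟨NA, NB⟩, ⟨⟨hNA, _⟩, hNB, _⟩, rfl⟩ ⟨⟨NA', NB'⟩, _, heq⟩
    refine (con1 NA hNA NB hNB).2.2 ?_
    simp only at heq
    rw [← heq]
    exact Set.mem_insert est _
  have hinj1 : Set.InjOn (fun p : Set (Sym2 V) × Set (Sym2 V) => p.1 ∪ p.2) ({N | N ∈ SuppM D A ∧ N.ncard = smu D A} ×ˢ {N | N ∈ SuppM D B ∧ N.ncard = smu D B}) := by
    rintro ⟨NA, NB⟩ ⟨⟨hNA, _⟩, hNB, _⟩ ⟨NA', NB'⟩ ⟨⟨hNA', _⟩, hNB', _⟩ heq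
    obtain ⟨h1, h2⟩ := union_suppM_injOn hdisj hNA hNB hNA' hNB' heq
    exact Prod.ext h1 h2
  have hinj2 : Set.InjOn (fun p : Set (Sym2 V) × Set (Sym2 V) => insert est (p.1 ∪ p.2))
      ({N | N ∈ SuppM D (A \ {s}) ∧ N.ncard = smu D (A \ {s})} ×ˢ {N | N ∈ SuppM D (B \ {t}) ∧ N.ncard = smu D (B \ {t})}) := by
    rintro ⟨NA, NB⟩ ⟨⟨hNA, _⟩, hNB, _⟩ ⟨NA', NB'⟩ ⟨⟨hNA', _⟩, hNB', _⟩ heq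
    have h1 : est ∉ NA ∪ NB := hnotin NA hNA NB hNB
    have h2 : est ∉ NA' ∪ NB' := hnotin NA' hNA' NB' hNB'
    have heq' : NA ∪ NB = NA' ∪ NB' := by
      have := congrArg (· \ ({est} : Set (Sym2 V))) heq
      simpa [Set.insert_diff_of_mem, Set.diff_singleton_eq_self h1,
        Set.diff_singleton_eq_self h2] using this
    obtain ⟨h3, h4⟩ := union_suppM_injOn hdisj' hNA hNB hNA' hNB' heq'
    exact Prod.ext h3 h4
  have hmmG : mm G = {N | N ∈ SuppM D A ∧ N.ncard = smu D A}.ncard * {N | N ∈ SuppM D B ∧ N.ncard = smu D B}.ncard + {N | N ∈ SuppM D (A \ {s}) ∧ N.ncard = smu D (A \ {s})}.ncard * {N | N ∈ SuppM D (B \ {t}) ∧ N.ncard = smu D (B \ {t})}.ncard := by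
    rw [mm, hMM, Set.ncard_union_eq hdisjIm, Set.ncard_image_of_injOn hinj1,
      Set.ncard_image_of_injOn hinj2, ncard_prod, ncard_prod]
  exact ⟨htypeB, by omega, by omega, hμG, hmmG⟩

/-- for a tree `T`, a vertex `s` of type A and a neighbour `t` of `s`,
with `T_s`, `T_t` the components of `T − st` containing `s`, `t`: the vertex `t` is of
type B, `μ(T_s − s) = μ(T_s)`, `μ(T_t − t) = μ(T_t) − 1`, `μ(T) = μ(T_s) + μ(T_t)` and
`m(T) = m(T_s)m(T_t) + m(T_s − s)m(T_t − t)`. -/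
theorem stmt_11 {V : Type} [Fintype V] (G : SimpleGraph V) (htree : G.IsTree)
    (s t : V) (hA : TypeA G s) (hadj : G.Adj s t) :
    TypeB G t ∧
    sideMuDel G s t = sideMu G s t ∧
    sideMu G t s = sideMuDel G t s + 1 ∧
    matchNum G = sideMu G s t + sideMu G t s ∧
    mm G = sideM G s t * sideM G t s + sideMDel G s t * sideMDel G t s := by
  obtain ⟨hcover, hdisj, hedge⟩ := side_structure G htree s t hadj
  have hswap : s(t, s) = s(s, t) := Sym2.eq_swap
  obtain ⟨h1, h2, h3, h4, h5⟩ := core G (G.deleteEdges {s(s, t)}) s t (s(s, t))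
    (sideSet G s t) (sideSet G t s) hadj
    (SimpleGraph.edgeSet_deleteEdges _) ((SimpleGraph.mem_edgeSet G).mpr hadj)
    (Sym2.mem_mk_left s t) (Sym2.mem_mk_right s t)
    (fun v hv => Sym2.mem_iff.1 hv)
    hdisj hedge (SimpleGraph.Reachable.refl s) (SimpleGraph.Reachable.refl t) hA
  refine ⟨h1, ?_, ?_, ?_, ?_⟩
  · show matchNum ((G.deleteEdges {s(s, t)}).induce (sideSet G s t \ {s}))
      = matchNum ((G.deleteEdges {s(s, t)}).induce (sideSet G s t))
    rw [matchNum_induce, matchNum_induce]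
    exact h2
  · show matchNum ((G.deleteEdges {s(t, s)}).induce (sideSet G t s))
      = matchNum ((G.deleteEdges {s(t, s)}).induce (sideSet G t s \ {t})) + 1
    rw [hswap, matchNum_induce, matchNum_induce]
    exact h3
  · show matchNum G = matchNum ((G.deleteEdges {s(s, t)}).induce (sideSet G s t))
      + matchNum ((G.deleteEdges {s(t, s)}).induce (sideSet G t s))
    rw [hswap, matchNum_induce, matchNum_induce]
    exact h4
  · show mm G = mm ((G.deleteEdges {s(s, t)}).induce (sideSet G s t))
        * mm ((G.deleteEdges {s(t, s)}).induce (sideSet G t s))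
      + mm ((G.deleteEdges {s(s, t)}).induce (sideSet G s t \ {s}))
        * mm ((G.deleteEdges {s(t, s)}).induce (sideSet G t s \ {t}))
    rw [hswap, mm_induce, mm_induce, mm_induce, mm_induce]
    exact h5


end PaperMM
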